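/- Fix a finite alphabet 𝔄 = {a⁽¹⁾,…,a⁽ᴸ⁾} ⊂ ℝ with minimal gap d_min := min{|a−a'| : a,a' ∈ 𝔄, a ≠ a'} > 0, weights ω⁽ˡ⁾ ∈ ℝ₊₊^N with Σ_l ω⁽ˡ⁾_n = 1 for each n, and ω_max := max_{l,n} ω⁽ˡ⁾_n. If b > √(2ω_max/d_min), then the set of all isolated local minimizers of Θ(x) := Σ_{l=1}^L (‖·‖_{ω⁽ˡ⁾;1})_{bI}(x − a⁽ˡ⁾1_N) is exactly 𝔄^N. -/

import Mathlib

open Filter Topology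

noncomputable def envVal (w b t : ℝ) : ℝ :=
  if |t| ≤ w / b ^ 2 then b ^ 2 * t ^ 2 / 2 else w * |t| - w ^ 2 / (2 * b ^ 2)

noncomputable def phi (w b t : ℝ) : ℝ := w * |t| - envVal w b t

lemma env_le {w b : ℝ} (hw : 0 < w) (hb : 0 < b) (t s : ℝ) :
    envVal w b t ≤ w * |s| + b ^ 2 * (t - s) ^ 2 / 2 := by
  have hb2 : (0:ℝ) < b ^ 2 := by positivity
  by_cases h : |t| ≤ w / b ^ 2
  · rw [envVal, if_pos h]
    have h1 : t * s ≤ |t| * |s| := by rw [← abs_mul]; exact le_abs_self _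
    have h2 : |t| * |s| ≤ (w / b ^ 2) * |s| := mul_le_mul_of_nonneg_right h (abs_nonneg s)
    have h3 : b ^ 2 * ((w / b ^ 2) * |s|) = w * |s| := by field_simp
    nlinarith [mul_le_mul_of_nonneg_left h1 hb2.le, mul_le_mul_of_nonneg_left h2 hb2.le,
      sq_nonneg s, hw.le, abs_nonneg s]
  · rw [envVal, if_neg h]
    have h4 : |t| - |s| ≤ |t - s| := abs_sub_abs_le_abs_sub t s
    have key : w * |t - s| - w ^ 2 / (2 * b ^ 2) ≤ b ^ 2 * (t - s) ^ 2 / 2 := by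
      set u := |t - s| with hu
      have hu2 : (t - s) ^ 2 = u ^ 2 := (sq_abs _).symm
      rw [hu2]
      have h5 : b ^ 2 * u ^ 2 / 2 + w ^ 2 / (2 * b ^ 2) - w * u
          = (b ^ 2 * u - w) ^ 2 / (2 * b ^ 2) := by field_simp; ring
      have h6 : (0:ℝ) ≤ (b ^ 2 * u - w) ^ 2 / (2 * b ^ 2) := by positivity
      linarith
    nlinarith [mul_le_mul_of_nonneg_left h4 hw.le]

lemma env_attain {w b : ℝ} (hw : 0 < w) (hb : 0 < b) (t : ℝ) :
    ∃ s : ℝ, w * |s| + b ^ 2 * (t - s) ^ 2 / 2 = envVal w b t := by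
  have hb2 : (0:ℝ) < b ^ 2 := by positivity
  rcases le_or_gt (|t|) (w / b ^ 2) with h | h
  · refine ⟨0, ?_⟩
    rw [envVal, if_pos h]
    simp
  · rw [envVal, if_neg (not_le.mpr h)]
    rcases le_or_gt 0 t with ht | ht
    · refine ⟨t - w / b ^ 2, ?_⟩
      have h1 : 0 ≤ t - w / b ^ 2 := by
        have : w / b ^ 2 < t := by rwa [abs_of_nonneg ht] at h
        linarith
      rw [abs_of_nonneg h1, abs_of_nonneg ht]
      field_simp
      ring
    · refine ⟨t + w / b ^ 2, ?_⟩
      have h1 : t + w / b ^ 2 ≤ 0 := by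
        have : w / b ^ 2 < -t := by rwa [abs_of_neg ht] at h
        linarith
      rw [abs_of_nonpos h1, abs_of_neg ht]
      field_simp
      ring

lemma phi_small {w b : ℝ} {t : ℝ} (h : |t| ≤ w / b ^ 2) :
    phi w b t = w * |t| - b ^ 2 * t ^ 2 / 2 := by
  rw [phi, envVal, if_pos h]

lemma phi_plateau {w b : ℝ} (hw : 0 < w) (hb : 0 < b) {t : ℝ} (h : w / b ^ 2 ≤ |t|) :
    phi w b t = w ^ 2 / (2 * b ^ 2) := by
  have hb2 : (0:ℝ) < b ^ 2 := by positivity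
  rcases eq_or_lt_of_le h with h' | h'
  · rw [phi, envVal, if_pos h'.ge]
    rw [← sq_abs t, ← h']
    field_simp
    ring
  · rw [phi, envVal, if_neg (not_le.mpr h')]
    ring

lemma phi_zero {w b : ℝ} (hw : 0 < w) (hb : 0 < b) : phi w b 0 = 0 := by
  rw [phi_small (by simpa using (by positivity : (0:ℝ) ≤ w / b ^ 2))]
  simp

lemma phi_le_plateau {w b : ℝ} (hw : 0 < w) (hb : 0 < b) (t : ℝ) :
    phi w b t ≤ w ^ 2 / (2 * b ^ 2) := by
  have hb2 : (0:ℝ) < b ^ 2 := by positivity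
  by_cases h : |t| ≤ w / b ^ 2
  · rw [phi_small h, le_div_iff₀ (by positivity : (0:ℝ) < 2 * b ^ 2), ← sq_abs t]
    nlinarith [sq_nonneg (b ^ 2 * |t| - w)]
  · rw [phi_plateau hw hb (le_of_not_ge h)]

lemma phi_mono {w b : ℝ} (hw : 0 < w) (hb : 0 < b) {s t : ℝ} (h : |s| ≤ |t|) :
    phi w b s ≤ phi w b t := by
  have hb2 : (0:ℝ) < b ^ 2 := by positivity
  by_cases ht : |t| ≤ w / b ^ 2
  · rw [phi_small ht, phi_small (h.trans ht)]
    have h1 : 0 ≤ (|t| - |s|) * (w - b ^ 2 * (|t| + |s|) / 2) := by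
      apply mul_nonneg (by linarith)
      have h2 : b ^ 2 * |t| ≤ w := by
        have := mul_le_mul_of_nonneg_left ht hb2.le
        calc b ^ 2 * |t| ≤ b ^ 2 * (w / b ^ 2) := this
          _ = w := by field_simp
      nlinarith [abs_nonneg s]
    rw [← sq_abs s, ← sq_abs t]
    nlinarith [h1]
  · rw [phi_plateau hw hb (le_of_not_ge ht)]
    exact phi_le_plateau hw hb s

lemma phi_nonneg {w b : ℝ} (hw : 0 < w) (hb : 0 < b) (t : ℝ) : 0 ≤ phi w b t := by
  have := phi_mono hw hb (s := 0) (t := t) (by simp)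
  rwa [phi_zero hw hb] at this

lemma phi_strict {w b : ℝ} (hw : 0 < w) (hb : 0 < b) {s t : ℝ}
    (h : |s| < |t|) (ht : |t| ≤ w / b ^ 2) :
    phi w b s < phi w b t := by
  have hb2 : (0:ℝ) < b ^ 2 := by positivity
  rw [phi_small ht, phi_small (h.le.trans ht)]
  have h2 : b ^ 2 * |t| ≤ w := by
    have := mul_le_mul_of_nonneg_left ht hb2.le
    calc b ^ 2 * |t| ≤ b ^ 2 * (w / b ^ 2) := this
      _ = w := by field_simp
  have h1 : 0 < (|t| - |s|) * (w - b ^ 2 * (|t| + |s|) / 2) := by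
    apply mul_pos (by linarith)
    nlinarith [abs_nonneg s]
  rw [← sq_abs s, ← sq_abs t]
  nlinarith [h1]

lemma exists_pos_le {ι : Type*} [Fintype ι] (f : ι → ℝ) (hf : ∀ i, 0 < f i) :
    ∃ ε > 0, ∀ i, ε ≤ f i := by
  rcases isEmpty_or_nonempty ι with h | h
  · exact ⟨1, one_pos, fun i => (h.false i).elim⟩
  · refine ⟨Finset.univ.inf' Finset.univ_nonempty f, ?_, ?_⟩
    · exact (Finset.lt_inf'_iff _).mpr fun i _ => hf i
    · intro i; exact Finset.inf'_le f (Finset.mem_univ i)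

lemma coord_abs_le {N : ℕ} (u : EuclideanSpace ℝ (Fin N)) (n : Fin N) : |u n| ≤ ‖u‖ := by
  rw [EuclideanSpace.norm_eq]
  calc |u n| = Real.sqrt (‖u n‖ ^ 2) := by
        rw [Real.norm_eq_abs, sq_abs, Real.sqrt_sq_eq_abs]
    _ ≤ Real.sqrt (∑ i, ‖u i‖ ^ 2) := by
        apply Real.sqrt_le_sqrt
        exact Finset.single_le_sum (f := fun i => ‖u i‖ ^ 2) (fun i _ => by positivity)
          (Finset.mem_univ n)

noncomputable def theta {L : ℕ} (a : Fin L → ℝ) (w : Fin L → ℝ) (b t : ℝ) : ℝ :=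
  ∑ l, phi (w l) b (t - a l)

lemma theta_min {L : ℕ} {a : Fin L → ℝ} {dmin b : ℝ} {w : Fin L → ℝ}
    (hw : ∀ l, 0 < w l) (hb : 0 < b) (hd : 0 < dmin)
    (hsep : ∀ l l', l ≠ l' → dmin ≤ |a l - a l'|)
    (hkey : ∀ l, w l / b ^ 2 < dmin / 2)
    (l : Fin L) {t : ℝ} (h : |t - a l| < dmin / 2) :
    theta a w b (a l) ≤ theta a w b t := by
  refine Finset.sum_le_sum fun l' _ => ?_
  by_cases hl : l' = l
  · subst hl
    rw [sub_self, phi_zero (hw l') hb]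
    exact phi_nonneg (hw l') hb _
  · have h1 : dmin ≤ |a l - a l'| := hsep l l' (fun he => hl he.symm)
    have h2 : w l' / b ^ 2 ≤ |a l - a l'| := by linarith [hkey l', hd]
    have h3 : w l' / b ^ 2 ≤ |t - a l'| := by
      have h5 := abs_sub_le (a l) t (a l')
      have h6 : |a l - t| = |t - a l| := abs_sub_comm _ _
      linarith [hkey l', hd]
    rw [phi_plateau (hw l') hb h2, phi_plateau (hw l') hb h3]

lemma theta_descent {L : ℕ} {a : Fin L → ℝ} {dmin b : ℝ} {w : Fin L → ℝ}
    (hw : ∀ l, 0 < w l) (hb : 0 < b) (hd : 0 < dmin)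
    (hsep : ∀ l l', l ≠ l' → dmin ≤ |a l - a l'|)
    (hkey : ∀ l, w l / b ^ 2 < dmin / 2)
    (l : Fin L) {t : ℝ} (h0 : t ≠ a l) (h : |t - a l| ≤ w l / b ^ 2)
    {δ : ℝ} (hδ : 0 < δ) :
    ∃ s, |s - t| < δ ∧ theta a w b s < theta a w b t := by
  have hb2 : (0:ℝ) < b ^ 2 := by positivity
  have hu : 0 < |t - a l| := abs_pos.mpr (sub_ne_zero.mpr h0)
  set μ : ℝ := min (1/2) (δ / (2 * |t - a l|)) with hμdef
  have hμpos : 0 < μ := lt_min (by norm_num) (by positivity)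
  have hμle : μ ≤ 1/2 := min_le_left _ _
  have habs : |t - μ * (t - a l) - a l| = (1 - μ) * |t - a l| := by
    rw [show t - μ * (t - a l) - a l = (1 - μ) * (t - a l) by ring, abs_mul,
      abs_of_pos (by linarith : (0:ℝ) < 1 - μ)]
  have hlt : (1 - μ) * |t - a l| < |t - a l| := by nlinarith
  refine ⟨t - μ * (t - a l), ?_, ?_⟩
  · have h7 : |t - μ * (t - a l) - t| = μ * |t - a l| := by
      rw [show t - μ * (t - a l) - t = -(μ * (t - a l)) by ring, abs_neg, abs_mul,
        abs_of_pos hμpos]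
    rw [h7]
    have h5 : μ ≤ δ / (2 * |t - a l|) := min_le_right _ _
    calc μ * |t - a l| ≤ (δ / (2 * |t - a l|)) * |t - a l| :=
          mul_le_mul_of_nonneg_right h5 (abs_nonneg _)
      _ = δ / 2 := by field_simp
      _ < δ := by linarith
  · refine Finset.sum_lt_sum (fun l' _ => ?_) ⟨l, Finset.mem_univ l, ?_⟩
    · by_cases hl : l' = l
      · subst hl
        exact phi_mono (hw l') hb (by rw [habs]; exact hlt.le)
      · have h1 : dmin ≤ |a l - a l'| := hsep l l' (fun he => hl he.symm)
        have h6 : |a l - t| = |t - a l| := abs_sub_comm _ _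
        have h2 : w l' / b ^ 2 ≤ |t - a l'| := by
          have h5 := abs_sub_le (a l) t (a l')
          linarith [hkey l', hkey l]
        have h3 : w l' / b ^ 2 ≤ |t - μ * (t - a l) - a l'| := by
          have h5 := abs_sub_le (a l) (t - μ * (t - a l)) (a l')
          have h8 : |a l - (t - μ * (t - a l))| = (1 - μ) * |t - a l| := by
            rw [abs_sub_comm]; exact habs
          nlinarith [hkey l', hkey l, abs_nonneg (t - a l)]
        rw [phi_plateau (hw l') hb h2, phi_plateau (hw l') hb h3]
    · exact phi_strict (hw l) hb (by rw [habs]; exact hlt) h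

lemma theta_const {L : ℕ} {a : Fin L → ℝ} {b : ℝ} {w : Fin L → ℝ}
    (hw : ∀ l, 0 < w l) (hb : 0 < b)
    {t : ℝ} (h : ∀ l, w l / b ^ 2 < |t - a l|) :
    ∃ δ > 0, ∀ s, |s - t| < δ → theta a w b s = theta a w b t := by
  obtain ⟨δ, hδ, hδle⟩ := exists_pos_le (fun l => |t - a l| - w l / b ^ 2)
    (fun l => by have := h l; linarith)
  refine ⟨δ, hδ, fun s hs => Finset.sum_congr rfl fun l _ => ?_⟩
  have h2 : w l / b ^ 2 ≤ |s - a l| := by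
    have h4 := abs_sub_le t s (a l)
    have h3 : |t - s| = |s - t| := abs_sub_comm _ _
    have h5 := hδle l
    linarith
  rw [phi_plateau (hw l) hb h2, phi_plateau (hw l) hb (h l).le]

/-- `a` is an isolated local minimizer of the real-valued function `f`. -/
def IsIsolatedLocalMin {α : Type*} [TopologicalSpace α] (f : α → ℝ) (a : α) : Prop :=
  IsLocalMin f a ∧ ∃ U ∈ nhds a, ∀ y ∈ U, IsLocalMin f y → y = a

/-- With `b > √(2 ω_max / d_min)`, the set of all isolated local minimizers of the
regularizer `Θ(x) = Σ_l (‖·‖_{ω⁽ˡ⁾;1})_{bI}(x − a⁽ˡ⁾ 1)` is exactly `𝔄^N`. -/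
theorem isolated_minimizers_of_Theta {N L : ℕ} (a : Fin L → ℝ) (ha : Function.Injective a)
    (dmin : ℝ) (hdmin : IsLeast {d : ℝ | ∃ l l' : Fin L, l ≠ l' ∧ d = |a l - a l'|} dmin)
    (hdpos : 0 < dmin)
    (ω : Fin L → Fin N → ℝ) (hω : ∀ l n, 0 < ω l n)
    (hsum : ∀ n, ∑ l, ω l n = 1)
    (ωmax : ℝ) (hωmax : IsGreatest {w : ℝ | ∃ l n, w = ω l n} ωmax)
    (b : ℝ) (hb : Real.sqrt (2 * ωmax / dmin) < b) :
    {x : EuclideanSpace ℝ (Fin N) |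
        IsIsolatedLocalMin
          (fun x : EuclideanSpace ℝ (Fin N) =>
            ∑ l, ((∑ n, ω l n * |x n - a l|) -
              ⨅ v : EuclideanSpace ℝ (Fin N),
                ((∑ n, ω l n * |v n - a l|) + ‖b • (x - v)‖ ^ 2 / 2))) x} =
      {x : EuclideanSpace ℝ (Fin N) | ∀ n, ∃ l, x n = a l} := by
  obtain ⟨hωmem, hωub⟩ := hωmax
  obtain ⟨l₀, n₀, hω0⟩ := hωmem
  have hbpos : 0 < b := (Real.sqrt_nonneg _).trans_lt hb
  have hb2 : (0:ℝ) < b ^ 2 := by positivity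
  have hωmaxpos : 0 < ωmax := hω0 ▸ hω l₀ n₀
  have hb2gt : 2 * ωmax / dmin < b ^ 2 := (Real.sqrt_lt' hbpos).mp hb
  have hkey : ∀ l n, ω l n / b ^ 2 < dmin / 2 := by
    intro l n
    have h1 : ω l n ≤ ωmax := hωub ⟨l, n, rfl⟩
    have h2 : 2 * ωmax < b ^ 2 * dmin := by rwa [div_lt_iff₀ hdpos] at hb2gt
    rw [div_lt_div_iff₀ hb2 (by norm_num : (0:ℝ) < 2)]
    nlinarith
  have hsep : ∀ l l', l ≠ l' → dmin ≤ |a l - a l'| := fun l l' h => hdmin.2 ⟨l, l', h, rfl⟩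
  -- the Moreau envelope computation
  have hinf : ∀ (l : Fin L) (x : EuclideanSpace ℝ (Fin N)),
      (⨅ v : EuclideanSpace ℝ (Fin N),
        ((∑ n, ω l n * |v n - a l|) + ‖b • (x - v)‖ ^ 2 / 2))
        = ∑ n, envVal (ω l n) b (x n - a l) := by
    intro l x
    have hF : ∀ v : EuclideanSpace ℝ (Fin N),
        (∑ n, ω l n * |v n - a l|) + ‖b • (x - v)‖ ^ 2 / 2
          = ∑ n, (ω l n * |v n - a l| + b ^ 2 * (x n - v n) ^ 2 / 2) := by
      intro v
      have h1 : ‖b • (x - v)‖ ^ 2 = ∑ n, b ^ 2 * (x n - v n) ^ 2 := by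
        rw [EuclideanSpace.norm_eq, Real.sq_sqrt (by positivity)]
        refine Finset.sum_congr rfl fun n _ => ?_
        simp only [PiLp.smul_apply, PiLp.sub_apply, smul_eq_mul, Real.norm_eq_abs]
        rw [sq_abs, mul_pow]
      rw [h1, Finset.sum_div, ← Finset.sum_add_distrib]
    have hbdd : BddBelow (Set.range fun v : EuclideanSpace ℝ (Fin N) =>
        (∑ n, ω l n * |v n - a l|) + ‖b • (x - v)‖ ^ 2 / 2) := by
      refine ⟨∑ n, envVal (ω l n) b (x n - a l), ?_⟩
      rintro q ⟨v, rfl⟩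
      show (∑ n, envVal (ω l n) b (x n - a l))
          ≤ (∑ n, ω l n * |v n - a l|) + ‖b • (x - v)‖ ^ 2 / 2
      rw [hF v]
      refine Finset.sum_le_sum fun n _ => ?_
      have h2 := env_le (hω l n) hbpos (x n - a l) (v n - a l)
      have h3 : x n - a l - (v n - a l) = x n - v n := by ring
      rwa [h3] at h2
    apply le_antisymm
    · choose s hs using fun n => env_attain (hω l n) hbpos (x n - a l)
      have h4 := ciInf_le hbdd (show EuclideanSpace ℝ (Fin N) from WithLp.toLp 2 (fun n => a l + s n))
      refine h4.trans_eq ?_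
      rw [hF]
      refine Finset.sum_congr rfl fun n _ => ?_
      have h5 : (show EuclideanSpace ℝ (Fin N) from WithLp.toLp 2 (fun n => a l + s n)) n = a l + s n := rfl
      rw [h5, show a l + s n - a l = s n by ring,
        show x n - (a l + s n) = x n - a l - s n by ring]
      exact hs n
    · refine le_ciInf fun v => ?_
      rw [hF v]
      refine Finset.sum_le_sum fun n _ => ?_
      have h2 := env_le (hω l n) hbpos (x n - a l) (v n - a l)
      have h3 : x n - a l - (v n - a l) = x n - v n := by ring
      rwa [h3] at h2
  -- the objective is a separable sum of coordinatewise MCP-type functions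
  have hfeq : (fun x : EuclideanSpace ℝ (Fin N) =>
        ∑ l, ((∑ n, ω l n * |x n - a l|) -
          ⨅ v : EuclideanSpace ℝ (Fin N),
            ((∑ n, ω l n * |v n - a l|) + ‖b • (x - v)‖ ^ 2 / 2)))
      = fun x : EuclideanSpace ℝ (Fin N) => ∑ n, theta a (fun l => ω l n) b (x n) := by
    funext x
    calc (∑ l, ((∑ n, ω l n * |x n - a l|) -
          ⨅ v : EuclideanSpace ℝ (Fin N),
            ((∑ n, ω l n * |v n - a l|) + ‖b • (x - v)‖ ^ 2 / 2)))
        = ∑ l, ∑ n, phi (ω l n) b (x n - a l) := by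
          refine Finset.sum_congr rfl fun l _ => ?_
          rw [hinf l x, ← Finset.sum_sub_distrib]
          exact Finset.sum_congr rfl fun n _ => rfl
      _ = ∑ n, ∑ l, phi (ω l n) b (x n - a l) := Finset.sum_comm
      _ = ∑ n, theta a (fun l => ω l n) b (x n) := rfl
  have hupd : ∀ (q : EuclideanSpace ℝ (Fin N)) (j : Fin N) (c : ℝ) (k : Fin N),
      (q + EuclideanSpace.single j c) k = if k = j then q k + c else q k := by
    intro q j c k
    have h1 : (q + EuclideanSpace.single j c) k = q k + EuclideanSpace.single j c k := rfl
    rw [h1, EuclideanSpace.single_apply]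
    by_cases hk : k = j
    · rw [if_pos hk, if_pos hk]
    · rw [if_neg hk, if_neg hk, add_zero]
  have hupd_dist : ∀ (q : EuclideanSpace ℝ (Fin N)) (j : Fin N) (c : ℝ),
      dist (q + EuclideanSpace.single j c) q = |c| := by
    intro q j c
    rw [dist_eq_norm, add_sub_cancel_left, EuclideanSpace.norm_single, Real.norm_eq_abs]
  have hcoord : ∀ (y x : EuclideanSpace ℝ (Fin N)) (m : Fin N),
      |y m - x m| ≤ dist y x := by
    intro y x m
    rw [dist_eq_norm]
    have h1 := coord_abs_le (y - x) m
    rwa [PiLp.sub_apply] at h1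
  ext x
  simp only [Set.mem_setOf_eq]
  rw [hfeq]
  unfold IsIsolatedLocalMin
  constructor
  · rintro ⟨hmin, U, hU, hiso⟩ n
    by_contra hne
    push_neg at hne
    obtain ⟨ε, hε, hball⟩ := Metric.eventually_nhds_iff.mp hmin
    by_cases hcase : ∃ l, |x n - a l| ≤ ω l n / b ^ 2
    · -- descent: x is not even a local minimizer
      obtain ⟨l, hl⟩ := hcase
      obtain ⟨s, hs1, hs2⟩ := theta_descent (a := a) (w := fun l => ω l n)
        (fun l => hω l n) hbpos hdpos hsep (fun l => hkey l n) l (hne l) hl hε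
      set y : EuclideanSpace ℝ (Fin N) := x + EuclideanSpace.single n (s - x n) with hy
      have hyapp : ∀ m, y m = if m = n then s else x m := by
        intro m
        rw [hy, hupd]
        by_cases hm : m = n
        · subst hm; rw [if_pos rfl, if_pos rfl]; ring
        · rw [if_neg hm, if_neg hm]
      have hdisty : dist y x < ε := by
        rw [hy, hupd_dist]
        calc |s - x n| < ε := hs1
          _ ≤ ε := le_refl ε
      have hxy : (∑ m, theta a (fun l => ω l m) b (x m))
          ≤ ∑ m, theta a (fun l => ω l m) b (y m) := hball hdisty
      have hlt : (∑ m, theta a (fun l => ω l m) b (y m))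
          < ∑ m, theta a (fun l => ω l m) b (x m) := by
        refine Finset.sum_lt_sum (fun m _ => ?_) ⟨n, Finset.mem_univ n, ?_⟩
        · by_cases hm : m = n
          · subst hm; rw [hyapp m, if_pos rfl]; exact hs2.le
          · rw [hyapp m, if_neg hm]
        · rw [hyapp n, if_pos rfl]; exact hs2
      linarith
    · -- plateau: the objective is locally constant at x, contradicting isolatedness
      push_neg at hcase
      obtain ⟨δ, hδ, hconst⟩ := theta_const (a := a) (w := fun l => ω l n)
        (fun l => hω l n) hbpos hcase
      obtain ⟨ε', hε', hball'⟩ := Metric.mem_nhds_iff.mp hU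
      obtain ⟨c, hcpos, hcδ, hcε, hcε'⟩ :
          ∃ c : ℝ, 0 < c ∧ c < δ ∧ c < ε ∧ c < ε' := by
        refine ⟨min δ (min ε ε') / 2, ?_, ?_, ?_, ?_⟩ <;>
        · have h1 := min_le_left δ (min ε ε')
          have h2 := (min_le_right δ (min ε ε')).trans (min_le_left ε ε')
          have h3 := (min_le_right δ (min ε ε')).trans (min_le_right ε ε')
          have h4 : 0 < min δ (min ε ε') := lt_min hδ (lt_min hε hε')
          linarith
      set y : EuclideanSpace ℝ (Fin N) := x + EuclideanSpace.single n c with hy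
      have hyapp : ∀ m, y m = if m = n then x n + c else x m := by
        intro m
        rw [hy, hupd]
        by_cases hm : m = n
        · rw [if_pos hm, if_pos hm, hm]
        · rw [if_neg hm, if_neg hm]
      have hdisty : dist y x = c := by
        rw [hy, hupd_dist, abs_of_pos hcpos]
      have hyU : y ∈ U := hball' (by rw [Metric.mem_ball, hdisty]; exact hcε')
      have hgy : (∑ m, theta a (fun l => ω l m) b (y m))
          = ∑ m, theta a (fun l => ω l m) b (x m) := by
        refine Finset.sum_congr rfl fun m _ => ?_
        by_cases hm : m = n
        · subst hm
          rw [hyapp m, if_pos rfl]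
          refine hconst _ ?_
          rw [show x m + c - x m = c by ring, abs_of_pos hcpos]
          exact hcδ
        · rw [hyapp m, if_neg hm]
      have hymin : IsLocalMin
          (fun z : EuclideanSpace ℝ (Fin N) => ∑ m, theta a (fun l => ω l m) b (z m)) y := by
        refine Metric.eventually_nhds_iff.mpr ⟨ε - c, by linarith, fun z hz => ?_⟩
        have hzx : dist z x < ε := by
          have h1 := dist_triangle z y x
          rw [hdisty] at h1
          linarith
        have h2 : (∑ m, theta a (fun l => ω l m) b (x m))
            ≤ ∑ m, theta a (fun l => ω l m) b (z m) := hball hzx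
        show (∑ m, theta a (fun l => ω l m) b (y m))
            ≤ ∑ m, theta a (fun l => ω l m) b (z m)
        rw [hgy]
        exact h2
      have hyne : y ≠ x := by
        intro he
        have h1 : y n = x n := by rw [he]
        rw [hyapp n, if_pos rfl] at h1
        linarith
      exact hyne (hiso y hyU hymin)
  · intro hx
    choose lx hlx using hx
    obtain ⟨ε, hε, hεle⟩ := exists_pos_le (fun n => ω (lx n) n / b ^ 2)
      (fun n => div_pos (hω _ _) hb2)
    have hlocal : ∀ y : EuclideanSpace ℝ (Fin N), dist y x < ε →
        (∑ m, theta a (fun l => ω l m) b (x m)) ≤ ∑ m, theta a (fun l => ω l m) b (y m) := by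
      intro y hy
      refine Finset.sum_le_sum fun m _ => ?_
      have h1 : |y m - x m| < ε := lt_of_le_of_lt (hcoord y x m) hy
      have h2 : |y m - a (lx m)| < dmin / 2 := by
        rw [← hlx m]
        calc |y m - x m| < ε := h1
          _ ≤ ω (lx m) m / b ^ 2 := hεle m
          _ < dmin / 2 := hkey _ _
      rw [hlx m]
      exact theta_min (fun l => hω l m) hbpos hdpos hsep (fun l => hkey l m) (lx m) h2
    have hmin : IsLocalMin
        (fun z : EuclideanSpace ℝ (Fin N) => ∑ m, theta a (fun l => ω l m) b (z m)) x :=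
      Metric.eventually_nhds_iff.mpr ⟨ε, hε, fun y hy => hlocal y hy⟩
    refine ⟨hmin, Metric.ball x ε, Metric.ball_mem_nhds x hε, fun y hyB hymin => ?_⟩
    by_contra hyx
    have hex : ∃ m, y m ≠ x m := by
      by_contra hall
      push_neg at hall
      exact hyx (PiLp.ext hall)
    obtain ⟨m, hm⟩ := hex
    have hyball : dist y x < ε := Metric.mem_ball.mp hyB
    have h1 : |y m - x m| < ε := lt_of_le_of_lt (hcoord y x m) hyball
    have h0 : y m ≠ a (lx m) := by rw [← hlx m]; exact hm
    have hle : |y m - a (lx m)| ≤ ω (lx m) m / b ^ 2 := by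
      rw [← hlx m]
      exact h1.le.trans (hεle m)
    obtain ⟨ε₂, hε₂, hball₂⟩ := Metric.eventually_nhds_iff.mp hymin
    obtain ⟨s, hs1, hs2⟩ := theta_descent (a := a) (w := fun l => ω l m)
      (fun l => hω l m) hbpos hdpos hsep (fun l => hkey l m) (lx m) h0 hle hε₂
    set z : EuclideanSpace ℝ (Fin N) := y + EuclideanSpace.single m (s - y m) with hz
    have hzapp : ∀ k, z k = if k = m then s else y k := by
      intro k
      rw [hz, hupd]
      by_cases hk : k = m
      · subst hk; rw [if_pos rfl, if_pos rfl]; ring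
      · rw [if_neg hk, if_neg hk]
    have hdistz : dist z y < ε₂ := by
      rw [hz, hupd_dist]
      exact hs1
    have h2 : (∑ k, theta a (fun l => ω l k) b (y k))
        ≤ ∑ k, theta a (fun l => ω l k) b (z k) := hball₂ hdistz
    have h3 : (∑ k, theta a (fun l => ω l k) b (z k))
        < ∑ k, theta a (fun l => ω l k) b (y k) := by
      refine Finset.sum_lt_sum (fun k _ => ?_) ⟨m, Finset.mem_univ m, ?_⟩
      · by_cases hk : k = m
        · subst hk; rw [hzapp k, if_pos rfl]; exact hs2.le
        · rw [hzapp k, if_neg hk]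
      · rw [hzapp m, if_pos rfl]; exact hs2
    linarith
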